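/- Fix h ≥ 0 and s with 0 ≤ s ≤ h. The generating function Σ_P x^{ℓ(P)/2}, summed over all lattice paths P with steps (1,1) and (1,−1) that start at the origin, stay weakly between heights 0 and h, and end at height s (where ℓ(P) is the number of steps of P), equals Ũ_{h−s} / (√x · Ũ_{h+1}) as a formal identity, where Ũ_k = U_k(1/(2√x)). -/

import Mathlib

open Polynomial PowerSeries

/-- The height of the walk `p` after `k` steps (up-steps `true ↦ +1`, down-steps
`false ↦ −1`). -/
def pathHeight {m : ℕ} (p : Fin m → Bool) (k : ℕ) : ℤ :=
  ∑ i ∈ Finset.univ.filter (fun i : Fin m => (i : ℕ) < k),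
    (if p i then (1 : ℤ) else -1)

/-- The number of lattice paths with `ℓ` steps `(1,1)`, `(1,−1)`, starting at the origin,
staying weakly between heights `0` and `h`, and ending at height `s`. -/
noncomputable def boundedPathCount (h s ℓ : ℕ) : ℕ :=
  Nat.card {p : Fin ℓ → Bool //
    (∀ k : ℕ, k ≤ ℓ → 0 ≤ pathHeight p k ∧ pathHeight p k ≤ (h : ℤ)) ∧
    pathHeight p ℓ = (s : ℤ)}

/-- The renormalized Chebyshev polynomials of the second kind:
`chebV k = y^k · U_k(1/(2y))`, a polynomial in the variable `y = √x`.
Recursion: `chebV 0 = chebV 1 = 1`, `chebV (k+2) = chebV (k+1) − y² · chebV k`. -/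
noncomputable def chebV : ℕ → Polynomial ℤ
  | 0 => 1
  | 1 => 1
  | (k + 2) => chebV (k + 1) - Polynomial.X ^ 2 * chebV k

lemma pathHeight_zero {m : ℕ} (p : Fin m → Bool) : pathHeight p 0 = 0 := by
  simp [pathHeight]

lemma pathHeight_castSucc {ℓ : ℕ} (p : Fin (ℓ+1) → Bool) (k : ℕ) (hk : k ≤ ℓ) :
    pathHeight (fun i => p (Fin.castSucc i)) k = pathHeight p k := by
  unfold pathHeight
  rw [Finset.sum_filter, Finset.sum_filter, Fin.sum_univ_castSucc]
  have h1 : ¬ (ℓ < k) := by omega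
  simp [h1, Fin.coe_castSucc, Fin.val_last]

lemma pathHeight_succ_last {ℓ : ℕ} (p : Fin (ℓ+1) → Bool) :
    pathHeight p (ℓ+1) = pathHeight p ℓ + (if p (Fin.last ℓ) then 1 else -1) := by
  unfold pathHeight
  rw [Finset.sum_filter, Finset.sum_filter, Fin.sum_univ_castSucc, Fin.sum_univ_castSucc]
  have h2 : ∀ i : Fin ℓ, (i:ℕ) < ℓ + 1 := fun i => by omega
  simp [Fin.val_last, Fin.coe_castSucc, Fin.is_lt, h2]

lemma pathHeight_snoc_le {ℓ : ℕ} (q : Fin ℓ → Bool) (b : Bool) (k : ℕ) (hk : k ≤ ℓ) :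
    pathHeight (Fin.snoc q b) k = pathHeight q k := by
  rw [← pathHeight_castSucc (Fin.snoc q b) k hk]
  simp [Fin.snoc_castSucc]

lemma pathHeight_snoc_top {ℓ : ℕ} (q : Fin ℓ → Bool) (b : Bool) :
    pathHeight (Fin.snoc q b) (ℓ+1) = pathHeight q ℓ + (if b then 1 else -1) := by
  rw [pathHeight_succ_last, pathHeight_snoc_le q b ℓ le_rfl, Fin.snoc_last]

/-- bounded path count with integer endpoint -/
noncomputable def bCount (h : ℕ) (s : ℤ) (ℓ : ℕ) : ℕ :=
  Nat.card {p : Fin ℓ → Bool //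
    (∀ k : ℕ, k ≤ ℓ → 0 ≤ pathHeight p k ∧ pathHeight p k ≤ (h : ℤ)) ∧
    pathHeight p ℓ = s}

lemma bCount_zero (h : ℕ) (s : ℤ) : bCount h s 0 = if s = 0 then 1 else 0 := by
  unfold bCount
  split_ifs with hs
  · subst hs
    have : Nonempty {p : Fin 0 → Bool //
        (∀ k : ℕ, k ≤ 0 → 0 ≤ pathHeight p k ∧ pathHeight p k ≤ (h : ℤ)) ∧
        pathHeight p 0 = 0} := by
      refine ⟨⟨fun i => true, ?_, pathHeight_zero _⟩⟩
      intro k hk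
      interval_cases k
      simp [pathHeight_zero]
    have : Subsingleton {p : Fin 0 → Bool //
        (∀ k : ℕ, k ≤ 0 → 0 ≤ pathHeight p k ∧ pathHeight p k ≤ (h : ℤ)) ∧
        pathHeight p 0 = 0} := by
      constructor; rintro ⟨p, _⟩ ⟨q, _⟩
      ext i; exact absurd i.2 (by omega)
    exact Nat.card_unique
  · have : IsEmpty {p : Fin 0 → Bool //
        (∀ k : ℕ, k ≤ 0 → 0 ≤ pathHeight p k ∧ pathHeight p k ≤ (h : ℤ)) ∧
        pathHeight p 0 = s} := by
      constructor; rintro ⟨p, _, hend⟩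
      rw [pathHeight_zero] at hend
      exact hs hend.symm
    exact Nat.card_of_isEmpty

lemma bCount_out (h : ℕ) (s : ℤ) (ℓ : ℕ) (hso : s < 0 ∨ (h:ℤ) < s) : bCount h s ℓ = 0 := by
  unfold bCount
  have : IsEmpty {p : Fin ℓ → Bool //
      (∀ k : ℕ, k ≤ ℓ → 0 ≤ pathHeight p k ∧ pathHeight p k ≤ (h : ℤ)) ∧
      pathHeight p ℓ = s} := by
    constructor; rintro ⟨p, hb, hend⟩
    have := hb ℓ le_rfl
    rw [hend] at this
    rcases hso with h1 | h1 <;> omega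
  exact Nat.card_of_isEmpty

lemma bCount_rec (h : ℕ) (s : ℤ) (ℓ : ℕ) (hs0 : 0 ≤ s) (hsh : s ≤ (h:ℤ)) :
    bCount h s (ℓ+1) = bCount h (s-1) ℓ + bCount h (s+1) ℓ := by
  unfold bCount
  rw [← Nat.card_sum]
  apply Nat.card_congr
  refine
    { toFun := fun x => if hb : x.1 (Fin.last ℓ) then
        Sum.inl ⟨fun i => x.1 (Fin.castSucc i), ?_, ?_⟩
      else
        Sum.inr ⟨fun i => x.1 (Fin.castSucc i), ?_, ?_⟩
      invFun := Sum.elim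
        (fun y => ⟨Fin.snoc y.1 true, ?_, ?_⟩)
        (fun y => ⟨Fin.snoc y.1 false, ?_, ?_⟩)
      left_inv := ?_
      right_inv := ?_ }
  · intro k hk
    rw [pathHeight_castSucc _ k hk]
    exact x.2.1 k (by omega)
  · rw [pathHeight_castSucc _ ℓ le_rfl]
    have := x.2.2
    rw [pathHeight_succ_last, hb] at this
    simp at this; omega
  · intro k hk
    rw [pathHeight_castSucc _ k hk]
    exact x.2.1 k (by omega)
  · rw [pathHeight_castSucc _ ℓ le_rfl]
    have := x.2.2
    rw [pathHeight_succ_last] at this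
    simp [hb] at this
    omega
  · intro k hk
    rcases Nat.lt_or_ge k (ℓ+1) with h1 | h1
    · rw [pathHeight_snoc_le _ _ k (by omega)]
      exact y.2.1 k (by omega)
    · have hk' : k = ℓ + 1 := by omega
      subst hk'
      rw [pathHeight_snoc_top]
      have := y.2.2
      simp [this]; omega
  · rw [pathHeight_snoc_top, y.2.2]; simp
  · intro k hk
    rcases Nat.lt_or_ge k (ℓ+1) with h1 | h1
    · rw [pathHeight_snoc_le _ _ k (by omega)]
      exact y.2.1 k (by omega)
    · have hk' : k = ℓ + 1 := by omega
      subst hk'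
      rw [pathHeight_snoc_top]
      have := y.2.2
      simp [this]; omega
  · rw [pathHeight_snoc_top, y.2.2]; simp
  · rintro ⟨p, hp⟩
    by_cases hb : p (Fin.last ℓ) <;>
      simp only [hb, dif_pos, dif_neg, Bool.not_eq_true, Sum.elim_inl, Sum.elim_inr] <;>
      · apply Subtype.ext
        simp only []
        have : (fun i => p (Fin.castSucc i)) = Fin.init p := rfl
        rw [this]
        nth_rewrite 2 [← Fin.snoc_init_self p]
        simp [hb]
  · rintro (⟨q, hq⟩ | ⟨q, hq⟩)
    · simp only [Sum.elim_inl]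
      simp only [Fin.snoc_last, eq_self_iff_true, ↓reduceDIte]
      congr 1
      apply Subtype.ext
      funext i
      simp [Fin.snoc_castSucc]
    · simp only [Sum.elim_inr]
      simp only [Fin.snoc_last, Bool.false_eq_true, ↓reduceDIte]
      congr 1
      apply Subtype.ext
      funext i
      simp [Fin.snoc_castSucc]

lemma chebV_coeff_zero : ∀ k, (chebV k).coeff 0 = 1
  | 0 => by simp [chebV]
  | 1 => by simp [chebV]
  | (k+2) => by
      simp [chebV, Polynomial.mul_coeff_zero, chebV_coeff_zero (k+1)]

lemma chebV_ne (k : ℕ) : ((chebV k : Polynomial ℤ) : PowerSeries ℤ) ≠ 0 := by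
  intro H
  have := congrArg (PowerSeries.coeff 0) H
  simp [Polynomial.coeff_coe, chebV_coeff_zero] at this

lemma chebV_coe_rec (k : ℕ) :
    ((chebV (k+2) : Polynomial ℤ) : PowerSeries ℤ)
      = ((chebV (k+1) : Polynomial ℤ) : PowerSeries ℤ)
        - (PowerSeries.X : PowerSeries ℤ)^2 * ((chebV k : Polynomial ℤ) : PowerSeries ℤ) := by
  rw [show chebV (k+2) = chebV (k+1) - Polynomial.X ^ 2 * chebV k from rfl]
  rw [Polynomial.coe_sub, Polynomial.coe_mul, Polynomial.coe_pow, Polynomial.coe_X]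

noncomputable def Fser (h : ℕ) (s : ℤ) : PowerSeries ℤ :=
  PowerSeries.mk fun ℓ => (bCount h s ℓ : ℤ)

lemma Fser_out (h : ℕ) (s : ℤ) (hso : s < 0 ∨ (h:ℤ) < s) : Fser h s = 0 := by
  ext n
  simp [Fser, bCount_out h s n hso]

lemma Fser_rec (h : ℕ) (s : ℤ) (hs0 : 0 ≤ s) (hsh : s ≤ (h:ℤ)) :
    Fser h s = PowerSeries.C (if s = 0 then 1 else 0)
      + PowerSeries.X * (Fser h (s-1) + Fser h (s+1)) := by
  ext n
  cases n with
  | zero =>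
      simp only [Fser, coeff_mk, map_add, coeff_zero_C, coeff_zero_X_mul, add_zero,
        PowerSeries.coeff_zero_eq_constantCoeff]
      rw [bCount_zero]
      split_ifs <;> simp
  | succ n =>
      rw [map_add, coeff_succ_X_mul, map_add]
      simp only [Fser, coeff_mk, PowerSeries.coeff_C]
      rw [bCount_rec h s n hs0 hsh]
      push_cast
      simp

lemma claimC (h : ℕ) : ∀ t, t < h →
    ((chebV (t+1) : Polynomial ℤ) : PowerSeries ℤ) * Fser h ((h:ℤ) - t)
      = PowerSeries.X * ((chebV t : Polynomial ℤ) : PowerSeries ℤ) * Fser h ((h:ℤ) - t - 1) := by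
  intro t
  induction t with
  | zero =>
      intro ht
      have hrec := Fser_rec h h (by positivity) le_rfl
      have h1 : Fser h ((h:ℤ) + 1) = 0 := Fser_out h _ (Or.inr (by omega))
      rw [if_neg (show ¬ ((h:ℤ) = 0) from by omega)] at hrec
      simp only [map_zero, zero_add, h1, add_zero] at hrec
      show ((chebV 1 : Polynomial ℤ) : PowerSeries ℤ) * _ = _ * ((chebV 0 : Polynomial ℤ) : PowerSeries ℤ) * _
      rw [show chebV 1 = 1 from rfl, show chebV 0 = 1 from rfl]
      push_cast
      simpa using hrec
  | succ t ih =>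
      intro ht
      have hC := ih (by omega)
      have hs : (0:ℤ) ≤ (h:ℤ) - (t+1) := by omega
      have hrec := Fser_rec h ((h:ℤ) - (t+1)) hs (by omega)
      rw [if_neg (show ¬ (((h:ℤ) - (t+1)) = 0) from by omega)] at hrec
      simp only [map_zero, zero_add] at hrec
      rw [show ((h:ℤ) - (t+1) - 1) = (h:ℤ) - t - 1 - 1 from by ring,
        show ((h:ℤ) - (t+1) + 1) = (h:ℤ) - t from by ring] at hrec
      rw [show ((h:ℤ) - ((t+1:ℕ):ℤ)) = (h:ℤ) - t - 1 from by push_cast; ring]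
      rw [show ((h:ℤ) - ((t:ℤ) + 1)) = (h:ℤ) - t - 1 from by ring] at hrec
      have chebEq := chebV_coe_rec t
      linear_combination ((chebV (t+1) : Polynomial ℤ) : PowerSeries ℤ) * hrec
        + PowerSeries.X * hC + Fser h ((h:ℤ) - t - 1) * chebEq

lemma anchor (h : ℕ) :
    ((chebV (h+1) : Polynomial ℤ) : PowerSeries ℤ) * Fser h 0
      = ((chebV h : Polynomial ℤ) : PowerSeries ℤ) := by
  have hrec := Fser_rec h 0 le_rfl (by positivity)
  have hm1 : Fser h (0 - 1) = 0 := Fser_out h _ (Or.inl (by omega))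
  rw [hm1, zero_add, if_pos rfl, map_one] at hrec
  match h with
  | 0 =>
      have h1 : Fser 0 ((0:ℤ) + 1) = 0 := Fser_out 0 _ (Or.inr (by omega))
      rw [h1, mul_zero, add_zero] at hrec
      rw [show chebV 1 = 1 from rfl, show chebV 0 = 1 from rfl]
      push_cast
      simp [hrec]
  | (m+1) =>
      have hC := claimC (m+1) m (by omega)
      rw [show ((m+1:ℕ):ℤ) - (m:ℤ) = 0 + 1 from by push_cast; ring] at hC
      rw [show ((0:ℤ) + 1 - 1) = 0 from by ring] at hC
      have chebEq := chebV_coe_rec m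
      linear_combination ((chebV (m+1) : Polynomial ℤ) : PowerSeries ℤ) * hrec
        + PowerSeries.X * hC + Fser (m+1) 0 * chebEq

lemma mainE (h : ℕ) : ∀ s, s ≤ h →
    ((chebV (h+1) : Polynomial ℤ) : PowerSeries ℤ) * Fser h (s:ℤ)
      = PowerSeries.X ^ s * ((chebV (h-s) : Polynomial ℤ) : PowerSeries ℤ) := by
  intro s
  induction s with
  | zero => intro _; simpa using anchor h
  | succ s ih =>
      intro hsh
      have IH := ih (by omega)
      have hC := claimC h (h - s - 1) (by omega)
      rw [show h - s - 1 + 1 = h - s from by omega] at hC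
      rw [show ((h:ℤ) - ((h - s - 1 : ℕ):ℤ)) = ((s+1:ℕ):ℤ) from by push_cast; omega] at hC
      rw [show (((s+1:ℕ):ℤ) - 1) = (s:ℤ) from by push_cast; ring] at hC
      apply mul_left_cancel₀ (chebV_ne (h - s))
      rw [show h - (s+1) = h - s - 1 from by omega]
      linear_combination ((chebV (h+1) : Polynomial ℤ) : PowerSeries ℤ) * hC
        + PowerSeries.X * ((chebV (h-s-1) : Polynomial ℤ) : PowerSeries ℤ) * IH


/-- Fix `h ≥ 0` and `0 ≤ s ≤ h`. The generating function `Σ_P x^{ℓ(P)/2}` over lattice paths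
`P` with steps `(1,1)`, `(1,−1)` starting at the origin, staying weakly between heights `0`
and `h`, and ending at height `s`, equals `Ũ_{h−s}/(√x · Ũ_{h+1})` where
`Ũ_k = U_k(1/(2√x))`. Formal version, in the power series ring in `y = √x`
(so that `x^{ℓ/2} = y^ℓ`), after clearing denominators:
`(y^{h+1}Ũ_{h+1}) · Σ_ℓ (#paths of length ℓ)·y^ℓ = y^s · (y^{h−s}Ũ_{h−s})`. -/
theorem bounded_paths_genfun (h s : ℕ) (hs : s ≤ h) :
    ((chebV (h + 1) : Polynomial ℤ) : PowerSeries ℤ) *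
        PowerSeries.mk (fun ℓ => (boundedPathCount h s ℓ : ℤ))
      = ((Polynomial.X ^ s * chebV (h - s) : Polynomial ℤ) : PowerSeries ℤ) := by
  have hmk : PowerSeries.mk (fun ℓ => (boundedPathCount h s ℓ : ℤ)) = Fser h (s:ℤ) := rfl
  rw [hmk, Polynomial.coe_mul, Polynomial.coe_pow, Polynomial.coe_X]
  exact mainE h s hs
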